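/- Let (Ω, F, P) be a probability space and let X⁽¹⁾, X⁽²⁾ : Ω → ℝ be random variables with E[(X⁽¹⁾ − X⁽²⁾)²] < ∞. Denoting by L(X⁽¹⁾) and L(X⁽²⁾) their laws, one has ‖L(X⁽¹⁾) − L(X⁽²⁾)‖²_{M₀} := ∫_ℝ |\widehat{L(X⁽¹⁾)}(y) − \widehat{L(X⁽²⁾)}(y)|² e^{−y²} dy ≤ √π · E[(X⁽¹⁾ − X⁽²⁾)²]. -/

import Mathlib

open MeasureTheory Real

lemma norm_exp_I_mul_sub (a b : ℝ) :
    ‖Complex.exp (Complex.I * a) - Complex.exp (Complex.I * b)‖ ≤ |a - b| := by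
  have h1 : Complex.exp (Complex.I * a) - Complex.exp (Complex.I * b)
      = Complex.exp (Complex.I * b) * (Complex.exp (Complex.I * (a - b)) - 1) := by
    rw [mul_sub, ← Complex.exp_add, mul_one]
    ring_nf
  rw [h1, norm_mul]
  have h2 : ‖Complex.exp (Complex.I * (b:ℂ))‖ = 1 := by
    rw [Complex.norm_exp]
    simp
  rw [h2, one_mul]
  obtain ⟨t, ht⟩ : ∃ t : ℝ, t = a - b := ⟨a - b, rfl⟩
  rw [← ht]
  have h3 : Complex.exp (Complex.I * (t:ℂ)) - 1
      = Complex.ofReal (Real.cos t - 1) + Complex.ofReal (Real.sin t) * Complex.I := by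
    rw [mul_comm, Complex.exp_mul_I]
    push_cast
    ring
  rw [show ((a:ℂ) - b) = ((t:ℝ):ℂ) by rw [ht]; push_cast; ring, h3]
  have h4 : ‖Complex.ofReal (Real.cos t - 1) + Complex.ofReal (Real.sin t) * Complex.I‖
      = Real.sqrt ((Real.cos t - 1)^2 + (Real.sin t)^2) := by
    rw [Complex.norm_def, Complex.normSq_add_mul_I]
  rw [h4]
  have h5 : (Real.cos t - 1)^2 + (Real.sin t)^2 ≤ t^2 := by
    have hs := Real.sin_sq_le_sq (x := t/2)
    have hid : Real.sin (t/2) ^ 2 = 1/2 - Real.cos (2 * (t/2)) / 2 := Real.sin_sq_eq_half_sub _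
    have hpy := Real.sin_sq_add_cos_sq t
    rw [mul_div_cancel₀ t two_ne_zero] at hid
    have hs' : 1/2 - Real.cos t/2 ≤ t^2/4 := by
      rw [← hid]; calc Real.sin (t/2)^2 ≤ (t/2)^2 := hs
        _ = t^2/4 := by ring
    nlinarith
  calc Real.sqrt ((Real.cos t - 1)^2 + (Real.sin t)^2) ≤ Real.sqrt (t^2) :=
        Real.sqrt_le_sqrt h5
    _ = |t| := Real.sqrt_sq_eq_abs t



lemma key_const : 3 * Real.sqrt 3 ≤ 2 * Real.exp 1 := by
  have h3 : Real.sqrt 3 ^ 2 = 3 := Real.sq_sqrt (by norm_num)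
  have h3n : 0 ≤ Real.sqrt 3 := Real.sqrt_nonneg 3
  have he : (2.7182818283 : ℝ) < Real.exp 1 := Real.exp_one_gt_d9
  nlinarith


/-- The Fourier transform (characteristic function) of a measure `μ` on `ℝ`:
`μ̂(y) = ∫ e^{i x y} dμ(x)`. -/
noncomputable def fourierOfMeasure (μ : Measure ℝ) (y : ℝ) : ℂ :=
  ∫ x, Complex.exp (Complex.I * x * y) ∂μ

/-- If `E[(X⁽¹⁾ − X⁽²⁾)²] < ∞`, then the laws satisfy
`‖L(X⁽¹⁾) − L(X⁽²⁾)‖²_{M₀} ≤ √π · E[(X⁽¹⁾ − X⁽²⁾)²]`. -/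
theorem law_M0_dist_le {Ω : Type*} [MeasurableSpace Ω] (P : Measure Ω) [IsProbabilityMeasure P]
    (X₁ X₂ : Ω → ℝ) (hX₁ : Measurable X₁) (hX₂ : Measurable X₂)
    (h_int : Integrable (fun ω => (X₁ ω - X₂ ω) ^ 2) P) :
    (∫ y : ℝ, ‖fourierOfMeasure (P.map X₁) y - fourierOfMeasure (P.map X₂) y‖ ^ 2 *
        Real.exp (-y ^ 2)) ≤
      Real.sqrt π * ∫ ω, (X₁ ω - X₂ ω) ^ 2 ∂P := by
  set C := ∫ ω, (X₁ ω - X₂ ω) ^ 2 ∂P with hC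
  have hC0 : 0 ≤ C := integral_nonneg fun ω => sq_nonneg _
  -- integrability of |X₁ - X₂|
  have hd_meas : Measurable fun ω => X₁ ω - X₂ ω := hX₁.sub hX₂
  have habs_int : Integrable (fun ω => |X₁ ω - X₂ ω|) P := by
    refine Integrable.mono' ((h_int.add (integrable_const 1)).div_const 2)
      hd_meas.abs.aestronglyMeasurable ?_
    filter_upwards with ω
    simp only [Pi.add_apply]
    rw [Real.norm_eq_abs, abs_abs]
    nlinarith [sq_nonneg (|X₁ ω - X₂ ω| - 1), sq_abs (X₁ ω - X₂ ω)]
  -- Cauchy-Schwarz : (∫ |d|)^2 ≤ C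
  have hCS : (∫ ω, |X₁ ω - X₂ ω| ∂P) ^ 2 ≤ C := by
    have h2 : (2:ℝ).HolderConjugate 2 := by
      constructor <;> norm_num
    have hmem : MemLp (fun ω => |X₁ ω - X₂ ω|) (ENNReal.ofReal 2) P := by
      rw [show ENNReal.ofReal 2 = 2 by norm_num]
      rw [memLp_two_iff_integrable_sq hd_meas.abs.aestronglyMeasurable]
      refine h_int.congr ?_
      filter_upwards with ω
      rw [sq_abs]
    have hmem1 : MemLp (fun _ : Ω => (1:ℝ)) (ENNReal.ofReal 2) P := memLp_const 1
    have := integral_mul_le_Lp_mul_Lq_of_nonneg h2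
      (Filter.Eventually.of_forall fun ω => abs_nonneg _)
      (Filter.Eventually.of_forall fun _ => zero_le_one) hmem hmem1
    simp only [mul_one, Real.one_rpow, integral_const, Measure.real, measure_univ, ENNReal.toReal_one,
      smul_eq_mul, one_mul] at this
    have hsq : ∫ ω, |X₁ ω - X₂ ω| ^ (2:ℝ) ∂P = C := by
      rw [hC]
      refine integral_congr_ae (Filter.Eventually.of_forall fun ω => ?_)
      dsimp only
      rw [show ((2:ℝ) = ((2:ℕ):ℝ)) by norm_num, Real.rpow_natCast, sq_abs]
    rw [hsq] at this
    calc (∫ ω, |X₁ ω - X₂ ω| ∂P) ^ 2 ≤ (C ^ (1/2 : ℝ)) ^ 2 := by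
          apply pow_le_pow_left₀ (integral_nonneg fun ω => abs_nonneg _) this
      _ = C := by
          rw [← Real.rpow_natCast (C ^ (1/2:ℝ)) 2, ← Real.rpow_mul hC0]
          norm_num
  -- pointwise bound on the Fourier transforms
  have hptwise : ∀ y : ℝ,
      ‖fourierOfMeasure (P.map X₁) y - fourierOfMeasure (P.map X₂) y‖ ^ 2 ≤ y ^ 2 * C := by
    intro y
    have hmeas : ∀ (X : Ω → ℝ), Measurable X →
        Measurable fun ω => Complex.exp (Complex.I * X ω * y) := fun X hX => by
      apply Complex.measurable_exp.comp
      exact (measurable_const.mul (Complex.measurable_ofReal.comp hX)).mul measurable_const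
    have hint : ∀ (X : Ω → ℝ), Measurable X →
        Integrable (fun ω => Complex.exp (Complex.I * X ω * y)) P := fun X hX => by
      refine Integrable.mono' (integrable_const 1) (hmeas X hX).aestronglyMeasurable ?_
      filter_upwards with ω
      rw [Complex.norm_exp]
      simp [Complex.mul_re]
    have hmap : ∀ (X : Ω → ℝ) (hX : Measurable X),
        fourierOfMeasure (P.map X) y = ∫ ω, Complex.exp (Complex.I * X ω * y) ∂P := by
      intro X hX
      rw [fourierOfMeasure, integral_map hX.aemeasurable]
      exact (Complex.measurable_exp.comp
        ((measurable_const.mul Complex.measurable_ofReal).mul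
          measurable_const)).aestronglyMeasurable
    rw [hmap X₁ hX₁, hmap X₂ hX₂, ← integral_sub (hint X₁ hX₁) (hint X₂ hX₂)]
    have hnorm : ‖∫ ω, (Complex.exp (Complex.I * X₁ ω * y)
        - Complex.exp (Complex.I * X₂ ω * y)) ∂P‖ ≤ |y| * ∫ ω, |X₁ ω - X₂ ω| ∂P := by
      calc ‖∫ ω, (Complex.exp (Complex.I * X₁ ω * y)
            - Complex.exp (Complex.I * X₂ ω * y)) ∂P‖
          ≤ ∫ ω, ‖Complex.exp (Complex.I * X₁ ω * y)
            - Complex.exp (Complex.I * X₂ ω * y)‖ ∂P := norm_integral_le_integral_norm _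
        _ ≤ ∫ ω, |y| * |X₁ ω - X₂ ω| ∂P := by
            refine integral_mono_of_nonneg
              (Filter.Eventually.of_forall fun ω => norm_nonneg _)
              (habs_int.const_mul |y|)
              (Filter.Eventually.of_forall fun ω => ?_)
            dsimp only
            have h1 : Complex.I * (X₁ ω : ℂ) * y = Complex.I * ((X₁ ω * y : ℝ) : ℂ) := by
              push_cast; ring
            have h2 : Complex.I * (X₂ ω : ℂ) * y = Complex.I * ((X₂ ω * y : ℝ) : ℂ) := by
              push_cast; ring
            rw [h1, h2]
            calc ‖Complex.exp (Complex.I * ((X₁ ω * y : ℝ):ℂ))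
                - Complex.exp (Complex.I * ((X₂ ω * y : ℝ):ℂ))‖
                ≤ |X₁ ω * y - X₂ ω * y| := norm_exp_I_mul_sub _ _
              _ = |y| * |X₁ ω - X₂ ω| := by
                  rw [← abs_mul]; ring_nf
        _ = |y| * ∫ ω, |X₁ ω - X₂ ω| ∂P := integral_const_mul _ _
    calc ‖∫ ω, (Complex.exp (Complex.I * X₁ ω * y)
          - Complex.exp (Complex.I * X₂ ω * y)) ∂P‖ ^ 2
        ≤ (|y| * ∫ ω, |X₁ ω - X₂ ω| ∂P) ^ 2 := by
          apply pow_le_pow_left₀ (norm_nonneg _) hnorm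
      _ = y ^ 2 * (∫ ω, |X₁ ω - X₂ ω| ∂P) ^ 2 := by
          rw [mul_pow, sq_abs]
      _ ≤ y ^ 2 * C := by
          apply mul_le_mul_of_nonneg_left hCS (sq_nonneg y)
  -- main estimate
  have hmain : (∫ y : ℝ, ‖fourierOfMeasure (P.map X₁) y - fourierOfMeasure (P.map X₂) y‖ ^ 2 *
      Real.exp (-y ^ 2)) ≤ ∫ y : ℝ, C * (3 / (2 * Real.exp 1)) * Real.exp (-(1/3) * y ^ 2) := by
    refine integral_mono_of_nonneg
      (Filter.Eventually.of_forall fun y => mul_nonneg (pow_nonneg (norm_nonneg _) 2)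
        (Real.exp_nonneg _))
      (((integrable_exp_neg_mul_sq (by norm_num : (0:ℝ) < 1/3)).const_mul _))
      (Filter.Eventually.of_forall fun y => ?_)
    have hb : y ^ 2 * Real.exp (-y^2) ≤ 3 / (2 * Real.exp 1) * Real.exp (-(1/3) * y ^ 2) := by
      have h1 : (2/3) * y^2 ≤ Real.exp ((2/3) * y^2 - 1) := by
        have := Real.add_one_le_exp ((2/3) * y^2 - 1)
        linarith
      have h2 : Real.exp ((2/3) * y^2 - 1) * Real.exp (-y^2)
          = Real.exp (-(1/3) * y^2) / Real.exp 1 := by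
        rw [← Real.exp_add, ← Real.exp_sub]
        congr 1
        ring
      have hepos : 0 < Real.exp 1 := Real.exp_pos 1
      have h3 : y^2 * Real.exp (-y^2) ≤ (3/2) * (Real.exp ((2/3)*y^2 - 1) * Real.exp (-y^2)) := by
        have := mul_le_mul_of_nonneg_right h1 (Real.exp_nonneg (-y^2))
        linarith
      rw [h2] at h3
      calc y^2 * Real.exp (-y^2) ≤ (3/2) * (Real.exp (-(1/3) * y^2) / Real.exp 1) := h3
        _ = 3 / (2 * Real.exp 1) * Real.exp (-(1/3) * y ^ 2) := by
          field_simp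
    calc ‖fourierOfMeasure (P.map X₁) y - fourierOfMeasure (P.map X₂) y‖ ^ 2 *
          Real.exp (-y ^ 2) ≤ (y^2 * C) * Real.exp (-y^2) := by
          apply mul_le_mul_of_nonneg_right (hptwise y) (Real.exp_nonneg _)
      _ = C * (y^2 * Real.exp (-y^2)) := by ring
      _ ≤ C * (3 / (2 * Real.exp 1) * Real.exp (-(1/3) * y ^ 2)) :=
          mul_le_mul_of_nonneg_left hb hC0
      _ = C * (3 / (2 * Real.exp 1)) * Real.exp (-(1/3) * y ^ 2) := by ring
  refine hmain.trans ?_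
  rw [integral_const_mul, integral_gaussian]
  have hval : Real.sqrt (π / (1/3)) = Real.sqrt 3 * Real.sqrt π := by
    rw [show π / (1/3) = 3 * π by ring, Real.sqrt_mul (by norm_num)]
  rw [hval]
  have hepos : 0 < Real.exp 1 := Real.exp_pos 1
  have h3 : 3 / (2 * Real.exp 1) * (Real.sqrt 3 * Real.sqrt π) ≤ Real.sqrt π := by
    rw [div_mul_eq_mul_div, div_le_iff₀ (by positivity)]
    have := key_const
    nlinarith [Real.sqrt_nonneg π, Real.sqrt_nonneg 3]
  calc C * (3 / (2 * Real.exp 1)) * (Real.sqrt 3 * Real.sqrt π)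
      = C * (3 / (2 * Real.exp 1) * (Real.sqrt 3 * Real.sqrt π)) := by ring
    _ ≤ C * Real.sqrt π := mul_le_mul_of_nonneg_left h3 hC0
    _ = Real.sqrt π * C := mul_comm _ _
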